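/- Let F be a Kripke frame and N a finite rooted n-model. Then F ⊭ β(N) (i.e., β(N) fails at some point of some model on F) if and only if there is a color-consistent monotonic map from the unraveling T_N of N into F. -/

import Mathlib

/-! ## Formulas of intuitionistic propositional logic -/

inductive Formula : Type
  | bot : Formula
  | var : ℕ → Formula
  | and : Formula → Formula → Formula
  | or  : Formula → Formula → Formula
  | imp : Formula → Formula → Formula
  deriving DecidableEq

namespace Formula

def top : Formula := imp bot bot

def iff_ (φ ψ : Formula) : Formula := and (imp φ ψ) (imp ψ φ)

/-- `φ` contains no implication at all. -/
def noImp : Formula → Prop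
  | bot => True
  | var _ => True
  | and φ ψ => noImp φ ∧ noImp ψ
  | or φ ψ => noImp φ ∧ noImp ψ
  | imp _ _ => False

/-- NNIL-formulas: no nesting of implications to the left. -/
def IsNNIL : Formula → Prop
  | bot => True
  | var _ => True
  | and φ ψ => IsNNIL φ ∧ IsNNIL ψ
  | or φ ψ => IsNNIL φ ∧ IsNNIL ψ
  | imp φ ψ => noImp φ ∧ IsNNIL ψ

/-- `φ` is an `n`-formula: all its propositional variables are among `p_0, …, p_{n-1}`. -/
def varsBelow (n : ℕ) : Formula → Prop
  | bot => True
  | var p => p < n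
  | and φ ψ => varsBelow n φ ∧ varsBelow n ψ
  | or φ ψ => varsBelow n φ ∧ varsBelow n ψ
  | imp φ ψ => varsBelow n φ ∧ varsBelow n ψ

/-- the propositional variable `p` occurs in the formula -/
def occurs (p : ℕ) : Formula → Prop
  | bot => False
  | var q => q = p
  | and φ ψ => occurs p φ ∨ occurs p ψ
  | or φ ψ => occurs p φ ∨ occurs p ψ
  | imp φ ψ => occurs p φ ∨ occurs p ψ

/-- uniform substitution -/
def subst (σ : ℕ → Formula) : Formula → Formula
  | bot => bot
  | var p => σ p
  | and φ ψ => and (subst σ φ) (subst σ ψ)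
  | or φ ψ => or (subst σ φ) (subst σ ψ)
  | imp φ ψ => imp (subst σ φ) (subst σ ψ)

end Formula

/-- finite conjunction (empty conjunction is ⊤) -/
def listAnd : List Formula → Formula
  | [] => Formula.top
  | φ :: l => Formula.and φ (listAnd l)

/-- finite disjunction (empty disjunction is ⊥) -/
def listOr : List Formula → Formula
  | [] => Formula.bot
  | φ :: l => Formula.or φ (listOr l)

/-! ## Kripke structures, models and satisfaction -/

/-- raw Kripke structure: worlds, relation, Boolean valuation -/
structure KStruct where
  W : Type
  R : W → W → Prop
  V : W → ℕ → Bool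

namespace KStruct

/-- a Kripke model: `R` is a partial order and `V` is persistent -/
def IsModel (M : KStruct) : Prop :=
  (∀ w, M.R w w) ∧
  (∀ w u v, M.R w u → M.R u v → M.R w v) ∧
  (∀ w u, M.R w u → M.R u w → w = u) ∧
  (∀ w u p, M.R w u → M.V w p = true → M.V u p = true)

/-- an `n`-model: a Kripke model whose valuation is restricted to the variables `p_0,…,p_{n-1}` -/
def IsNModel (M : KStruct) (n : ℕ) : Prop :=
  M.IsModel ∧ ∀ w p, n ≤ p → M.V w p = false

/-- intuitionistic satisfaction -/
def sat (M : KStruct) : M.W → Formula → Prop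
  | _, Formula.bot => False
  | w, Formula.var p => M.V w p = true
  | w, Formula.and φ ψ => M.sat w φ ∧ M.sat w ψ
  | w, Formula.or φ ψ => M.sat w φ ∨ M.sat w ψ
  | w, Formula.imp φ ψ => ∀ u, M.R w u → M.sat u φ → M.sat u ψ

/-- the submodel on a subset of the worlds -/
def restrict (M : KStruct) (S : Set M.W) : KStruct where
  W := S
  R := fun a b => M.R a.1 b.1
  V := fun a p => M.V a.1 p

end KStruct

/-- monotonic map between Kripke structures: preserves the order and the colors -/
def Monotonic (M N : KStruct) (f : M.W → N.W) : Prop :=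
  (∀ w u, M.R w u → N.R (f w) (f u)) ∧ (∀ w p, N.V (f w) p = M.V w p)

/-- p-morphism: a monotonic map satisfying the forth condition -/
def PMorphism (M N : KStruct) (f : M.W → N.W) : Prop :=
  Monotonic M N f ∧ ∀ w u', N.R (f w) u' → ∃ u, M.R w u ∧ f u = u'

/-- MR: the class of formulas reflected by monotonic maps between Kripke models -/
def MR (φ : Formula) : Prop :=
  ∀ (N M : KStruct), N.IsModel → M.IsModel →
    ∀ f : N.W → M.W, Monotonic N M f → ∀ w : N.W, M.sat (f w) φ → N.sat w φ

/-- `r` is a root of `M` -/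
def IsRoot (M : KStruct) (r : M.W) : Prop := ∀ w, M.R r w

/-- `M` is tree-like with root `r`: rooted, and each point has a finite,
linearly ordered set of predecessors -/
def IsTree (M : KStruct) (r : M.W) : Prop :=
  IsRoot M r ∧ (∀ w : M.W, {u | M.R u w}.Finite) ∧
  (∀ w u v : M.W, M.R u w → M.R v w → (M.R u v ∨ M.R v u))

/-- `u` is an immediate (proper) successor of `w` -/
def ImmSucc (M : KStruct) (w u : M.W) : Prop :=
  M.R w u ∧ w ≠ u ∧ ∀ v, M.R w v → M.R v u → v = w ∨ v = u

/-- `S` carries a color-preserving submodel of `M` -/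
def ColorPresSub (M : KStruct) (S : Set M.W) : Prop :=
  ∀ w ∈ S, ∀ u, M.R w u → ∃ v ∈ S, M.R w v ∧ ∀ p, M.V v p = M.V u p

/-! ## The β-formulas of finite models -/

/-- the variables among `p_0,…,p_{n-1}` true at `w` -/
def propList (M : KStruct) (n : ℕ) (w : M.W) : List Formula :=
  ((List.range n).filter (fun p => M.V w p)).map Formula.var

/-- the variables among `p_0,…,p_{n-1}` false at `w` -/
def notpropList (M : KStruct) (n : ℕ) (w : M.W) : List Formula :=
  ((List.range n).filter (fun p => !(M.V w p))).map Formula.var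

open Classical in
/-- the immediate successors of `w`, as a list -/
noncomputable def immSuccList (M : KStruct) [Fintype M.W] (w : M.W) : List M.W :=
  (Finset.univ.filter (fun u => ImmSucc M w u)).toList

/-- β(w), defined by recursion on the depth of `w` (computed with enough fuel):
`β(w) = ⋀prop(w) → (⋁notprop(w) ∨ β(w_1) ∨ … ∨ β(w_k))` where the `w_i` are the
immediate successors of `w` (for maximal `w` the last disjunct is the empty disjunction). -/
noncomputable def betaFuel (M : KStruct) [Fintype M.W] (n : ℕ) : ℕ → M.W → Formula
  | 0, _ => Formula.bot
  | (k+1), w =>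
      Formula.imp (listAnd (propList M n w))
        (listOr (notpropList M n w ++ (immSuccList M w).map (fun u => betaFuel M n k u)))

/-- β(w) for a point `w` of a finite `n`-model: `Fintype.card M.W` is an upper bound
for the depth of any point, so the recursion above never runs out of fuel. -/
noncomputable def beta (M : KStruct) [inst : Fintype M.W] (n : ℕ) (w : M.W) : Formula :=
  betaFuel M n (Fintype.card M.W) w

/-! ## Unravelings -/

/-- the unraveling `T_N` of a rooted model `(N, r)`: points are the finite sequences
`⟨r, w_1, …, w_k⟩` in which each entry is an immediate successor of the preceding one,
ordered by the initial-segment relation; such a sequence satisfies the same variables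
as its last entry. -/
def Unravel (M : KStruct) (r : M.W) : KStruct where
  W := {l : List M.W // l.head? = some r ∧ List.Chain' (ImmSucc M) l}
  R := fun σ τ => σ.1 <+: τ.1
  V := fun σ p => (σ.1.getLast?.map (fun w => M.V w p)).getD false

/-! ## Kripke frames -/

structure KFrame where
  W : Type
  R : W → W → Prop

namespace KFrame

/-- a Kripke frame: `R` is a partial order -/
def IsFrame (F : KFrame) : Prop :=
  (∀ w, F.R w w) ∧ (∀ w u v, F.R w u → F.R u v → F.R w v) ∧
  (∀ w u, F.R w u → F.R u w → w = u)

def Persistent (F : KFrame) (V : F.W → ℕ → Bool) : Prop :=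
  ∀ w u p, F.R w u → V w p = true → V u p = true

/-- the model on `F` given by a valuation -/
def model (F : KFrame) (V : F.W → ℕ → Bool) : KStruct := ⟨F.W, F.R, V⟩

/-- `F ⊨ φ` : `φ` is true at every point of every model on `F` -/
def valid (F : KFrame) (φ : Formula) : Prop :=
  ∀ V, F.Persistent V → ∀ w, (F.model V).sat w φ

/-- the substructure of `F` on a subset `S` of its domain, with the restricted order -/
def restrictF (F : KFrame) (S : Set F.W) : KFrame :=
  ⟨S, fun a b => F.R a.1 b.1⟩

end KFrame

/-- a monotonic map from a model `N` into a frame `F` which is color-consistent: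
`f(w) R f(u)` implies `col(w) ≤ col(u)` -/
def ColorConsistentMap (N : KStruct) (F : KFrame) (f : N.W → F.W) : Prop :=
  (∀ w u, N.R w u → F.R (f w) (f u)) ∧
  (∀ w u, F.R (f w) (f u) → ∀ p, N.V w p = true → N.V u p = true)




/-! ## Auxiliary lemmas -/

section Aux

lemma sat_listAnd (M : KStruct) (w : M.W) (L : List Formula) :
    M.sat w (listAnd L) ↔ ∀ φ ∈ L, M.sat w φ := by
  induction L with
  | nil => simp [listAnd, Formula.top, KStruct.sat]
  | cons φ l ih => simp [listAnd, KStruct.sat, ih]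

lemma sat_listOr (M : KStruct) (w : M.W) (L : List Formula) :
    M.sat w (listOr L) ↔ ∃ φ ∈ L, M.sat w φ := by
  induction L with
  | nil => simp [listOr, KStruct.sat]
  | cons φ l ih => simp [listOr, KStruct.sat, ih]

lemma mem_propList {M : KStruct} {n : ℕ} {w : M.W} {p : ℕ} :
    Formula.var p ∈ propList M n w ↔ p < n ∧ M.V w p = true := by
  simp [propList]

lemma mem_notpropList {M : KStruct} {n : ℕ} {w : M.W} {p : ℕ} :
    Formula.var p ∈ notpropList M n w ↔ p < n ∧ M.V w p = false := by
  simp [notpropList]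

lemma mem_immSuccList {M : KStruct} [Fintype M.W] {w u : M.W} :
    u ∈ immSuccList M w ↔ ImmSucc M w u := by
  simp [immSuccList]

/-- upward persistence of satisfaction on a frame with a persistent valuation -/
lemma sat_persist (F : KFrame) (hF : F.IsFrame) (V : F.W → ℕ → Bool)
    (hV : F.Persistent V) (φ : Formula) :
    ∀ x y, F.R x y → (F.model V).sat x φ → (F.model V).sat y φ := by
  induction φ with
  | bot => intro x y _ h; exact h
  | var p => intro x y hxy h; exact hV x y p hxy h
  | and φ ψ ihφ ihψ => intro x y hxy h; exact ⟨ihφ _ _ hxy h.1, ihψ _ _ hxy h.2⟩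
  | or φ ψ ihφ ihψ =>
      intro x y hxy h
      rcases h with h | h
      · exact Or.inl (ihφ _ _ hxy h)
      · exact Or.inr (ihψ _ _ hxy h)
  | imp φ ψ ihφ ihψ =>
      intro x y hxy h u hyu hu
      exact h u (hF.2.1 x y u hxy hyu) hu

/-- unfolding a refuted `betaFuel` implication -/
lemma step_ex (F : KFrame) (V : F.W → ℕ → Bool)
    (N : KStruct) [Fintype N.W] (n : ℕ) (x : F.W) (w : N.W) (k : ℕ)
    (h : ¬ (F.model V).sat x (betaFuel N n (k+1) w)) :
    ∃ u, F.R x u ∧ (∀ p, p < n → V u p = N.V w p) ∧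
      ∀ w', ImmSucc N w w' → ¬ (F.model V).sat u (betaFuel N n k w') := by
  simp only [betaFuel, KStruct.sat] at h
  push_neg at h
  obtain ⟨u, hxu, hA, hB⟩ := h
  rw [sat_listOr] at hB
  push_neg at hB
  refine ⟨u, hxu, ?_, ?_⟩
  · intro p hp
    by_cases hw : N.V w p = true
    · have := (sat_listAnd _ _ _).1 hA (Formula.var p) (mem_propList.2 ⟨hp, hw⟩)
      simp only [KStruct.sat] at this
      rw [hw]; exact this
    · have hw' : N.V w p = false := by simpa using hw
      have := hB (Formula.var p)
        (List.mem_append_left _ (mem_notpropList.2 ⟨hp, hw'⟩))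
      simp only [KStruct.sat] at this
      simp only [hw']
      have h2 : (F.model V).V u p = false := by simpa using this
      exact h2
  · intro w' hw'
    exact hB _ (List.mem_append_right _ (List.mem_map.2 ⟨w', mem_immSuccList.2 hw', rfl⟩))

/-- chains of immediate successors have no duplicates, hence bounded length -/
lemma chain_length_le (N : KStruct) [Fintype N.W] (hN : N.IsModel)
    (m : List N.W) (hm : List.Chain' (fun a b => ImmSucc N b a) m) :
    m.length ≤ Fintype.card N.W := by
  set s : N.W → N.W → Prop := fun a b => N.R b a ∧ b ≠ a with hs
  haveI : IsTrans N.W s := by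
    constructor
    intro a b c hab hbc
    refine ⟨hN.2.1 _ _ _ hbc.1 hab.1, ?_⟩
    intro hca
    subst hca
    exact hab.2 (hN.2.2.1 _ _ hab.1 hbc.1)
  have hm' : List.Chain' s m := by
    refine List.IsChain.imp ?_ hm
    intro a b hab
    exact ⟨hab.1, hab.2.1⟩
  have hp : List.Pairwise s m := List.isChain_iff_pairwise.1 hm'
  have hnd : m.Nodup := by
    refine List.Pairwise.imp ?_ hp
    intro a b hab
    exact fun hh => hab.2 hh.symm
  exact hnd.length_le_card

end Aux

section Build

open Classical in
/-- choose an extension point in the frame refuting the β-formulas of the successors -/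
noncomputable def pickStep (N : KStruct) [Fintype N.W] (n : ℕ) (F : KFrame)
    (V : F.W → ℕ → Bool) (x : F.W) (w : N.W) (k : ℕ) : F.W :=
  if h : ∃ u, F.R x u ∧ (∀ p, p < n → V u p = N.V w p) ∧
      ∀ w', ImmSucc N w w' → ¬ (F.model V).sat u (betaFuel N n k w') then h.choose else x

lemma pickStep_spec (N : KStruct) [Fintype N.W] (n : ℕ) (F : KFrame)
    (V : F.W → ℕ → Bool) (x : F.W) (w : N.W) (k : ℕ)
    (h : ∃ u, F.R x u ∧ (∀ p, p < n → V u p = N.V w p) ∧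
      ∀ w', ImmSucc N w w' → ¬ (F.model V).sat u (betaFuel N n k w')) :
    F.R x (pickStep N n F V x w k) ∧
      (∀ p, p < n → V (pickStep N n F V x w k) p = N.V w p) ∧
      ∀ w', ImmSucc N w w' →
        ¬ (F.model V).sat (pickStep N n F V x w k) (betaFuel N n k w') := by
  rw [pickStep, dif_pos h]
  exact h.choose_spec

/-- the map on reversed chains -/
noncomputable def buildRev (N : KStruct) [Fintype N.W] (n : ℕ) (F : KFrame)
    (V : F.W → ℕ → Bool) (x₀ : F.W) : List N.W → F.W
  | [] => x₀
  | w :: m => pickStep N n F V (buildRev N n F V x₀ m) w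
      (Fintype.card N.W - (m.length + 1))

lemma build_inv (N : KStruct) [Fintype N.W] (n : ℕ) (F : KFrame) (hF : F.IsFrame)
    (hNm : N.IsModel) (r : N.W)
    (V : F.W → ℕ → Bool) (x₀ : F.W)
    (hx₀ : ¬ (F.model V).sat x₀ (beta N n r)) :
    ∀ m : List N.W, List.Chain' (fun a b => ImmSucc N b a) m →
      m.getLast? = some r → ∀ w, m.head? = some w →
      (∀ p, p < n → V (buildRev N n F V x₀ m) p = N.V w p) ∧
      (∀ w', ImmSucc N w w' →
        ¬ (F.model V).sat (buildRev N n F V x₀ m)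
          (betaFuel N n (Fintype.card N.W - m.length) w')) ∧
      (∀ m', m' <:+ m → F.R (buildRev N n F V x₀ m') (buildRev N n F V x₀ m)) := by
  intro m
  induction m with
  | nil => intro _ _ w hw; simp at hw
  | cons w m0 ih =>
    intro hch hlast w' hw'
    simp only [List.head?_cons, Option.some.injEq] at hw'
    subst hw'
    rcases m0 with _ | ⟨w₂, m1⟩
    · -- base case : the singleton [r]
      simp only [List.getLast?_singleton, Option.some.injEq] at hlast
      subst hlast
      have hcard : 1 ≤ Fintype.card N.W := Fintype.card_pos_iff.2 ⟨w⟩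
      have hx : ¬ (F.model V).sat x₀ (betaFuel N n ((Fintype.card N.W - 1) + 1) w) := by
        have : (Fintype.card N.W - 1) + 1 = Fintype.card N.W := by omega
        rw [this]; exact hx₀
      have hex := step_ex F V N n x₀ w (Fintype.card N.W - 1) hx
      have hspec := pickStep_spec N n F V x₀ w (Fintype.card N.W - 1) hex
      have hb : buildRev N n F V x₀ [w] =
          pickStep N n F V x₀ w (Fintype.card N.W - 1) := by
        simp [buildRev]
      refine ⟨?_, ?_, ?_⟩
      · rw [hb]; exact hspec.2.1
      · intro w' hw'
        have : Fintype.card N.W - [w].length = Fintype.card N.W - 1 := by simp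
        rw [this, hb]; exact hspec.2.2 w' hw'
      · intro m' hm'
        rcases List.suffix_cons_iff.1 hm' with h | h
        · subst h; exact hF.1 _
        · have : m' = [] := List.suffix_nil.1 h
          subst this
          show F.R x₀ _
          rw [hb]; exact hspec.1
    · -- step case
      have hch0 : List.Chain' (fun a b => ImmSucc N b a) (w₂ :: m1) :=
        (List.isChain_cons_cons.1 hch).2
      have himm : ImmSucc N w₂ w := (List.isChain_cons_cons.1 hch).1
      have hlast0 : (w₂ :: m1).getLast? = some r := by
        rwa [List.getLast?_cons_cons] at hlast
      obtain ⟨ihcol, ihref, ihmono⟩ := ih hch0 hlast0 w₂ rfl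
      have hlen : (w :: w₂ :: m1).length ≤ Fintype.card N.W :=
        chain_length_le N hNm _ hch
      have hfuel : Fintype.card N.W - (w₂ :: m1).length =
          (Fintype.card N.W - (w :: w₂ :: m1).length) + 1 := by
        simp only [List.length_cons] at *
        omega
      have hx : ¬ (F.model V).sat (buildRev N n F V x₀ (w₂ :: m1))
          (betaFuel N n ((Fintype.card N.W - (w :: w₂ :: m1).length) + 1) w) := by
        rw [← hfuel]; exact ihref w himm
      have hex := step_ex F V N n _ w _ hx
      have hspec := pickStep_spec N n F V (buildRev N n F V x₀ (w₂ :: m1)) w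
        (Fintype.card N.W - (w :: w₂ :: m1).length) hex
      have hb : buildRev N n F V x₀ (w :: w₂ :: m1) =
          pickStep N n F V (buildRev N n F V x₀ (w₂ :: m1)) w
            (Fintype.card N.W - (w :: w₂ :: m1).length) := by
        simp [buildRev]
      refine ⟨?_, ?_, ?_⟩
      · rw [hb]; exact hspec.2.1
      · intro w' hw'
        rw [hb]; exact hspec.2.2 w' hw'
      · intro m' hm'
        rcases List.suffix_cons_iff.1 hm' with h | h
        · subst h; exact hF.1 _
        · refine hF.2.1 _ _ _ (ihmono m' h) ?_
          rw [hb]; exact hspec.1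

end Build

/-- `F ⊭ β(N)` iff there is a color-consistent monotonic map from the
unraveling `T_N` of `N` into the frame `F`. -/
theorem beta_frame_refutation_via_color_consistent_maps
    (n : ℕ) (F : KFrame) (hF : F.IsFrame)
    (N : KStruct) [Fintype N.W] (hN : N.IsNModel n) (r : N.W) (hr : IsRoot N r) :
    (¬ F.valid (beta N n r)) ↔
      ∃ f : (Unravel N r).W → F.W, ColorConsistentMap (Unravel N r) F f := by
  have hpoint_ne : ∀ σ : (Unravel N r).W, σ.1 ≠ [] := by
    intro σ h
    have := σ.2.1
    rw [h] at this
    simp at this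
  have hpoint_last : ∀ σ : (Unravel N r).W, ∃ w, σ.1.getLast? = some w := by
    intro σ
    exact Option.isSome_iff_exists.1 (List.getLast?_isSome.2 (hpoint_ne σ))
  constructor
  · -- from a refutation to a color-consistent map
    intro hval
    rw [KFrame.valid] at hval
    push_neg at hval
    obtain ⟨V, hV, x₀, hx₀⟩ := hval
    have inv := build_inv N n F hF hN.1 r V x₀ hx₀
    have hrevch : ∀ σ : (Unravel N r).W,
        List.Chain' (fun a b => ImmSucc N b a) σ.1.reverse := by
      intro σ
      apply List.isChain_reverse.2
      exact σ.2.2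
    have hrevlast : ∀ σ : (Unravel N r).W, σ.1.reverse.getLast? = some r := by
      intro σ
      rw [List.getLast?_reverse]
      exact σ.2.1
    have hrevhead : ∀ (σ : (Unravel N r).W) (w : N.W), σ.1.getLast? = some w →
        σ.1.reverse.head? = some w := by
      intro σ w hw
      rw [List.head?_reverse]
      exact hw
    refine ⟨fun σ => buildRev N n F V x₀ σ.1.reverse, ?_, ?_⟩
    · intro σ τ hστ
      obtain ⟨wτ, hwτ⟩ := hpoint_last τ
      exact (inv τ.1.reverse (hrevch τ) (hrevlast τ) wτ (hrevhead τ wτ hwτ)).2.2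
        σ.1.reverse (List.reverse_suffix.2 hστ)
    · intro σ τ hR p hp
      obtain ⟨wσ, hwσ⟩ := hpoint_last σ
      obtain ⟨wτ, hwτ⟩ := hpoint_last τ
      simp only [Unravel, hwσ, Option.map_some, Option.getD_some] at hp
      simp only [Unravel, hwτ, Option.map_some, Option.getD_some]
      by_cases hpn : p < n
      · have colσ := (inv σ.1.reverse (hrevch σ) (hrevlast σ) wσ
          (hrevhead σ wσ hwσ)).1 p hpn
        have colτ := (inv τ.1.reverse (hrevch τ) (hrevlast τ) wτ
          (hrevhead τ wτ hwτ)).1 p hpn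
        have h1 : V (buildRev N n F V x₀ σ.1.reverse) p = true := by
          rw [colσ]; exact hp
        have h2 := hV _ _ p hR h1
        rw [colτ] at h2
        exact h2
      · have := hN.2 wσ p (by omega)
        rw [this] at hp
        exact absurd hp (by simp)
  · -- from a color-consistent map to a refutation
    rintro ⟨f, hf⟩
    classical
    set V : F.W → ℕ → Bool := fun x p =>
      decide (∃ σ : (Unravel N r).W, F.R (f σ) x ∧ (Unravel N r).V σ p = true)
      with hVdef
    have hVtrue : ∀ x p, V x p = true ↔
        ∃ σ : (Unravel N r).W, F.R (f σ) x ∧ (Unravel N r).V σ p = true := by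
      intro x p
      simp [hVdef]
    have hV : F.Persistent V := by
      intro x y p hxy h
      rw [hVtrue] at h ⊢
      obtain ⟨σ, h1, h2⟩ := h
      exact ⟨σ, hF.2.1 _ _ _ h1 hxy, h2⟩
    have main : ∀ (k : ℕ) (σ : (Unravel N r).W) (w : N.W), σ.1.getLast? = some w →
        ¬ (F.model V).sat (f σ) (betaFuel N n k w) := by
      intro k
      induction k with
      | zero =>
        intro σ w _ hsat
        exact hsat
      | succ k ih =>
        intro σ w hw hsat
        have hA : (F.model V).sat (f σ) (listAnd (propList N n w)) := by
          refine (sat_listAnd (F.model V) (f σ) _).2 ?_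
          intro φ hφ
          simp only [propList, List.mem_map, List.mem_filter, List.mem_range] at hφ
          obtain ⟨p, ⟨hp, hwp⟩, rfl⟩ := hφ
          show V (f σ) p = true
          rw [hVtrue]
          refine ⟨σ, hF.1 _, ?_⟩
          simp only [Unravel, hw, Option.map_some, Option.getD_some]
          exact hwp
        have hB := hsat (f σ) (hF.1 _) hA
        replace hB := (sat_listOr (F.model V) (f σ) _).1 hB
        obtain ⟨φ, hmem, hφ⟩ := hB
        rcases List.mem_append.1 hmem with hmem | hmem
        · simp only [notpropList, List.mem_map, List.mem_filter, List.mem_range] at hmem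
          obtain ⟨p, ⟨hp, hwp⟩, rfl⟩ := hmem
          have hφ' : V (f σ) p = true := hφ
          rw [hVtrue] at hφ'
          obtain ⟨τ, h1, h2⟩ := hφ'
          have := hf.2 τ σ h1 p h2
          simp only [Unravel, hw, Option.map_some, Option.getD_some] at this
          simp [this] at hwp
        · obtain ⟨w', hw', rfl⟩ := List.mem_map.1 hmem
          have himm : ImmSucc N w w' := mem_immSuccList.1 hw'
          have hσ'head : (σ.1 ++ [w']).head? = some r := by
            rw [List.head?_append_of_ne_nil _ (hpoint_ne σ)]
            exact σ.2.1
          have hσ'chain : List.Chain' (ImmSucc N) (σ.1 ++ [w']) := by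
            apply List.isChain_append.2
            refine ⟨σ.2.2, List.isChain_singleton _, ?_⟩
            intro x hx y hy
            simp only [List.head?_cons, Option.mem_def, Option.some.injEq] at hy
            rw [hw] at hx
            simp only [Option.mem_def, Option.some.injEq] at hx
            subst hx; subst hy
            exact himm
          set σ' : (Unravel N r).W := ⟨σ.1 ++ [w'], hσ'head, hσ'chain⟩ with hσ'
          have hmono : F.R (f σ) (f σ') := hf.1 σ σ' ⟨[w'], rfl⟩
          have hpers := sat_persist F hF V hV (betaFuel N n k w') _ _ hmono hφ
          exact ih σ' w' List.getLast?_concat hpers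
    intro hval
    have hσr : ([r] : List N.W).head? = some r ∧ List.Chain' (ImmSucc N) [r] :=
      ⟨rfl, List.isChain_singleton _⟩
    exact main (Fintype.card N.W) ⟨[r], hσr⟩ r (List.getLast?_singleton (a := r))
      (hval V hV (f ⟨[r], hσr⟩))
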